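/- arXiv:2504.15042 — 2 statements merged into one kernel-verified Lean document; each statement's English description precedes it below -/
import Mathlib

section
/- Let R = A S Aᴴ + σ² I_M, where A ∈ ℂ^{M×L} has full column rank L < M, S ∈ ℂ^{L×L} is Hermitian positive definite, and σ² > 0. Then R is Hermitian positive definite, the eigenvalue σ² of R has multiplicity exactly M − L, and the eigenspace of R for eigenvalue σ² equals the orthogonal complement of the column space of A. -/
open Matrix
open scoped ComplexOrder

/-- MUSIC eigenstructure: if `R = A S Aᴴ + σ² I` with `A ∈ ℂ^{M×L}` of full column rank
`L < M`, `S` Hermitian positive definite and `σ² > 0`, then `R` is (Hermitian) positive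
definite, the eigenspace of `R` for the eigenvalue `σ²` is exactly the orthogonal
complement of the column space of `A` (i.e. the kernel of `Aᴴ`), and this eigenvalue has
multiplicity exactly `M - L`. -/
theorem music_eigenstructure {M L : ℕ} (hLM : L < M)
    (A : Matrix (Fin M) (Fin L) ℂ) (hA : A.rank = L)
    (S : Matrix (Fin L) (Fin L) ℂ) (hS : S.PosDef)
    (σ2 : ℝ) (hσ2 : 0 < σ2)
    (R : Matrix (Fin M) (Fin M) ℂ)
    (hR : R = A * S * Aᴴ + (σ2 : ℂ) • (1 : Matrix (Fin M) (Fin M) ℂ)) :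
    R.PosDef ∧
    (∀ x : Fin M → ℂ, (R *ᵥ x = (σ2 : ℂ) • x ↔ Aᴴ *ᵥ x = 0)) ∧
    Module.finrank ℂ (Module.End.eigenspace R.mulVecLin (σ2 : ℂ)) = M - L := by
  have hσ2' : (0 : ℂ) < (σ2 : ℂ) := by exact_mod_cast hσ2
  have hPS : (A * S * Aᴴ).PosSemidef := hS.posSemidef.mul_mul_conjTranspose_same A
  have hI : ((σ2 : ℂ) • (1 : Matrix (Fin M) (Fin M) ℂ)).PosDef := by
    rw [smul_one_eq_diagonal]
    exact posDef_diagonal_iff.mpr fun _ => hσ2'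
  have hRpd : R.PosDef := hR ▸ Matrix.PosDef.posSemidef_add hPS hI
  -- the key equivalence
  have key : ∀ x : Fin M → ℂ, (R *ᵥ x = (σ2 : ℂ) • x ↔ Aᴴ *ᵥ x = 0) := by
    intro x
    have hRx : R *ᵥ x = (A * S * Aᴴ) *ᵥ x + (σ2 : ℂ) • x := by
      rw [hR, add_mulVec, smul_mulVec, one_mulVec]
    constructor
    · intro h
      have h0 : (A * S * Aᴴ) *ᵥ x = 0 := by
        have := hRx.symm.trans h
        linear_combination (norm := module) this
      have hdot : star x ⬝ᵥ (A * S * Aᴴ) *ᵥ x = 0 := by rw [h0, dotProduct_zero]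
      by_contra hne
      have hrw : star x ⬝ᵥ (A * S * Aᴴ) *ᵥ x
          = star (Aᴴ *ᵥ x) ⬝ᵥ S *ᵥ (Aᴴ *ᵥ x) := by
        rw [← mulVec_mulVec, ← mulVec_mulVec, dotProduct_mulVec, star_mulVec,
          conjTranspose_conjTranspose]
      exact (hS.dotProduct_mulVec_pos hne).ne' (hrw ▸ hdot)
    · intro h
      rw [hRx, ← mulVec_mulVec, ← mulVec_mulVec, h, mulVec_zero, mulVec_zero, zero_add]
  refine ⟨hRpd, key, ?_⟩
  have heig : Module.End.eigenspace R.mulVecLin (σ2 : ℂ)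
      = LinearMap.ker (Aᴴ).mulVecLin := by
    ext x
    rw [Module.End.mem_eigenspace_iff, LinearMap.mem_ker, mulVecLin_apply, mulVecLin_apply]
    exact key x
  rw [heig]
  have hrank : (Aᴴ).rank = L := by rw [rank_conjTranspose, hA]
  have := LinearMap.finrank_range_add_finrank_ker (Aᴴ).mulVecLin
  rw [Matrix.rank] at hrank
  rw [hrank] at this
  simp only [Module.finrank_fintype_fun_eq_card, Fintype.card_fin] at this
  omega
end

section
/- Under the MUSIC setup R = A S Aᴴ + σ² I_M with A having full column rank and S positive definite, if U_N ∈ ℂ^{M×(M−L)} has orthonormal columns spanning the eigenspace of R with eigenvalue σ², then for any column a of A one has U_Nᴴ a = 0; consequently the MUSIC spectrum P(τ) = 1/(a(τ)ᴴ U_N U_Nᴴ a(τ)) has a pole (the denominator vanishes) exactly when a(τ) lies in the column space of A. -/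
open Matrix
open scoped ComplexOrder

/-- MUSIC noise subspace orthogonality: under `R = A S Aᴴ + σ² I` with `A` of full column
rank and `S` positive definite, if the columns of `U_N` are orthonormal and span the
eigenspace of `R` for eigenvalue `σ²`, then `U_Nᴴ a = 0` for every column `a` of `A`;
consequently the denominator `vᴴ U_N U_Nᴴ v` of the MUSIC spectrum vanishes exactly when
`v` lies in the column space of `A`. -/
theorem music_noise_subspace_orthogonality {M L : ℕ} (hLM : L < M)
    (A : Matrix (Fin M) (Fin L) ℂ) (hA : A.rank = L)
    (S : Matrix (Fin L) (Fin L) ℂ) (hS : S.PosDef)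
    (σ2 : ℝ) (hσ2 : 0 < σ2)
    (R : Matrix (Fin M) (Fin M) ℂ)
    (hR : R = A * S * Aᴴ + (σ2 : ℂ) • (1 : Matrix (Fin M) (Fin M) ℂ))
    (UN : Matrix (Fin M) (Fin (M - L)) ℂ)
    (hUortho : UNᴴ * UN = 1)
    (hUspan : LinearMap.range UN.mulVecLin
        = Module.End.eigenspace R.mulVecLin (σ2 : ℂ)) :
    (∀ l : Fin L, UNᴴ *ᵥ (fun i => A i l) = 0) ∧
    (∀ v : Fin M → ℂ,
      star v ⬝ᵥ ((UN * UNᴴ) *ᵥ v) = 0 ↔ v ∈ LinearMap.range A.mulVecLin) := by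
  -- The eigenspace of `R` for `σ²` is exactly the kernel of `Aᴴ`.
  have hK : Module.End.eigenspace R.mulVecLin (σ2 : ℂ)
      = LinearMap.ker (Aᴴ).mulVecLin := by
    ext x
    rw [Module.End.mem_eigenspace_iff, LinearMap.mem_ker]
    simp only [Matrix.mulVecLin_apply]
    constructor
    · intro hx
      have h0 : (A * S * Aᴴ) *ᵥ x = 0 := by
        rw [hR, Matrix.add_mulVec, Matrix.smul_mulVec, Matrix.one_mulVec] at hx
        exact add_eq_right.mp hx
      by_contra hne
      have hpos := hS.dotProduct_mulVec_pos hne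
      have hzero : star (Aᴴ *ᵥ x) ⬝ᵥ (S *ᵥ (Aᴴ *ᵥ x)) = 0 := by
        rw [Matrix.star_mulVec, Matrix.conjTranspose_conjTranspose,
          ← Matrix.dotProduct_mulVec, Matrix.mulVec_mulVec, Matrix.mulVec_mulVec, h0,
          dotProduct_zero]
      rw [hzero] at hpos
      exact lt_irrefl _ hpos
    · intro hx
      rw [hR, Matrix.add_mulVec, Matrix.smul_mulVec, Matrix.one_mulVec,
        ← Matrix.mulVec_mulVec, ← Matrix.mulVec_mulVec, hx]
      simp
  -- every column of `UN` is killed by `Aᴴ`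
  have hker : ∀ k : Fin (M - L), Aᴴ *ᵥ (fun i => UN i k) = 0 := by
    intro k
    have hmem : (fun i => UN i k) ∈ LinearMap.range UN.mulVecLin := by
      refine ⟨Pi.single k 1, ?_⟩
      ext i
      simp [Matrix.mulVecLin_apply, Matrix.mulVec, dotProduct, Pi.single_apply]
    rw [hUspan, hK, LinearMap.mem_ker] at hmem
    simpa [Matrix.mulVecLin_apply] using hmem
  have hAU : Aᴴ * UN = 0 := by
    ext l k
    have := congrFun (hker k) l
    simpa [Matrix.mul_apply, Matrix.mulVec, dotProduct] using this
  have hUA : UNᴴ * A = 0 := by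
    have : (Aᴴ * UN)ᴴ = UNᴴ * A := by
      rw [Matrix.conjTranspose_mul, Matrix.conjTranspose_conjTranspose]
    rw [← this, hAU]
    simp
  -- Part 1
  have part1 : ∀ l : Fin L, UNᴴ *ᵥ (fun i => A i l) = 0 := by
    intro l
    ext k
    have : (UNᴴ *ᵥ (fun i => A i l)) k = (UNᴴ * A) k l := by
      simp [Matrix.mul_apply, Matrix.mulVec, dotProduct]
    rw [this, hUA]
    simp
  refine ⟨part1, ?_⟩
  -- orthogonality between range A and ker Aᴴ
  have horth : ∀ x : Fin M → ℂ, Aᴴ *ᵥ x = 0 → ∀ c : Fin L → ℂ,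
      star x ⬝ᵥ (A *ᵥ c) = 0 := by
    intro x hx c
    rw [Matrix.dotProduct_mulVec]
    have : star x ᵥ* A = 0 := by
      have := congrArg star hx
      rw [Matrix.star_mulVec, Matrix.conjTranspose_conjTranspose] at this
      simpa using this
    rw [this, zero_dotProduct]
  -- dimension counting
  have hRange : Module.finrank ℂ (LinearMap.range A.mulVecLin) = L := hA
  have hRankAH : Module.finrank ℂ (LinearMap.range (Aᴴ).mulVecLin) = L := by
    have := A.rank_conjTranspose
    rw [hA] at this
    exact this
  have hrn := LinearMap.finrank_range_add_finrank_ker (Aᴴ).mulVecLin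
  rw [hRankAH] at hrn
  have hdomM : Module.finrank ℂ (Fin M → ℂ) = M := by simp
  rw [hdomM] at hrn
  have hKdim : Module.finrank ℂ (LinearMap.ker (Aᴴ).mulVecLin) = M - L := by omega
  -- intersection is trivial
  have hdisj : LinearMap.range A.mulVecLin ⊓ LinearMap.ker (Aᴴ).mulVecLin = ⊥ := by
    rw [Submodule.eq_bot_iff]
    intro x hx
    rw [Submodule.mem_inf] at hx
    obtain ⟨⟨c, rfl⟩, hxk⟩ := hx
    rw [LinearMap.mem_ker] at hxk
    rw [Matrix.mulVecLin_apply] at hxk ⊢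
    exact dotProduct_star_self_eq_zero.mp (horth _ hxk c)
  -- sup is everything
  have hsup : LinearMap.range A.mulVecLin ⊔ LinearMap.ker (Aᴴ).mulVecLin = ⊤ := by
    apply Submodule.eq_top_of_finrank_eq
    have := Submodule.finrank_sup_add_finrank_inf_eq
      (LinearMap.range A.mulVecLin) (LinearMap.ker (Aᴴ).mulVecLin)
    rw [hdisj, hRange, hKdim] at this
    simp only [finrank_bot, add_zero] at this
    rw [hdomM]
    omega
  intro v
  constructor
  · intro hv
    -- the quadratic form equals ‖UNᴴ v‖²
    have hquad : star v ⬝ᵥ ((UN * UNᴴ) *ᵥ v) = star (UNᴴ *ᵥ v) ⬝ᵥ (UNᴴ *ᵥ v) := by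
      rw [← Matrix.mulVec_mulVec, Matrix.dotProduct_mulVec, Matrix.star_mulVec,
        Matrix.conjTranspose_conjTranspose]
    rw [hquad] at hv
    have hw : UNᴴ *ᵥ v = 0 := dotProduct_star_self_eq_zero.mp hv
    -- v is orthogonal to ker Aᴴ
    have hperp : ∀ x ∈ LinearMap.ker (Aᴴ).mulVecLin, star x ⬝ᵥ v = 0 := by
      intro x hx
      rw [← hK, ← hUspan] at hx
      obtain ⟨c, rfl⟩ := hx
      rw [Matrix.mulVecLin_apply, Matrix.star_mulVec, ← Matrix.dotProduct_mulVec, hw,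
        dotProduct_zero]
    -- decompose v
    have hvtop : v ∈ LinearMap.range A.mulVecLin ⊔ LinearMap.ker (Aᴴ).mulVecLin := by
      rw [hsup]; trivial
    obtain ⟨y, hy, z, hz, hyz⟩ := Submodule.mem_sup.mp hvtop
    obtain ⟨c, hc⟩ := hy
    have hz0 : z = 0 := by
      have h1 : star z ⬝ᵥ v = 0 := hperp z hz
      have h2 : star z ⬝ᵥ y = 0 := by
        rw [LinearMap.mem_ker, Matrix.mulVecLin_apply] at hz
        rw [← hc, Matrix.mulVecLin_apply]
        exact horth z hz c
      have h3 : star z ⬝ᵥ z = 0 := by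
        have : star z ⬝ᵥ (y + z) = 0 := by rw [hyz]; exact h1
        rw [dotProduct_add, h2, zero_add] at this
        exact this
      exact dotProduct_star_self_eq_zero.mp h3
    rw [hz0, add_zero] at hyz
    rw [← hyz, ← hc]
    exact ⟨c, rfl⟩
  · rintro ⟨c, rfl⟩
    rw [Matrix.mulVecLin_apply, ← Matrix.mulVec_mulVec, Matrix.mulVec_mulVec,
      ← Matrix.mulVec_mulVec (A *ᵥ c)]
    have : UNᴴ *ᵥ (A *ᵥ c) = 0 := by
      rw [Matrix.mulVec_mulVec, hUA, Matrix.zero_mulVec]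
    rw [this, Matrix.mulVec_zero, dotProduct_zero]
end
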